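/- In a (75,32,10,16) strongly regular graph, if K is a 4-clique not contained in any 5-clique, and b_i denotes the number of vertices outside K with exactly i neighbors in K (so b_4 = 0), then (b_0,b_1,b_2,b_3) is one of (3,20,48,0), (0,29,39,3), (1,26,42,2), (2,23,45,1). -/
import Mathlib

open Finset

/-- The number of neighbors of `x` inside the vertex set `K`. -/
def nbrs {V : Type*} [DecidableEq V] (G : SimpleGraph V) [DecidableRel G.Adj]
    (K : Finset V) (x : V) : ℕ :=
  (K.filter (fun y => G.Adj x y)).card

/-- The number of vertices outside `K` with exactly `i` neighbors in `K`. -/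
def bcount {V : Type*} [Fintype V] [DecidableEq V] (G : SimpleGraph V) [DecidableRel G.Adj]
    (K : Finset V) (i : ℕ) : ℕ :=
  ((univ \ K).filter (fun x => nbrs G K x = i)).card

section Aux

variable {V : Type*} [Fintype V] [DecidableEq V] {G : SimpleGraph V} [DecidableRel G.Adj]

lemma aux_inK (hK : G.IsNClique 4 K) {y : V} (hy : y ∈ K) :
    (K.filter (fun x => G.Adj y x)).card = 3 := by
  have : K.filter (fun x => G.Adj y x) = K.erase y := by
    ext z
    simp only [mem_filter, mem_erase]
    constructor
    · rintro ⟨hz, ha⟩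
      exact ⟨(G.ne_of_adj ha).symm, hz⟩
    · rintro ⟨hne, hz⟩
      exact ⟨hz, hK.1 hy hz (Ne.symm hne)⟩
  rw [this, card_erase_of_mem hy, hK.2]

lemma aux_deg (hG : G.IsSRGWith 75 32 10 16) (hK : G.IsNClique 4 K) {y : V} (hy : y ∈ K) :
    ((univ \ K).filter (fun x => G.Adj y x)).card = 29 := by
  have huniv : (univ.filter (fun x => G.Adj y x)).card = 32 := by
    rw [← SimpleGraph.neighborFinset_eq_filter]
    exact hG.regular y
  have hsplit : univ.filter (fun x => G.Adj y x) =
      (univ \ K).filter (fun x => G.Adj y x) ∪ K.filter (fun x => G.Adj y x) := by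
    rw [← filter_union, sdiff_union_of_subset (subset_univ K)]
  have hdisj : Disjoint ((univ \ K).filter (fun x => G.Adj y x))
      (K.filter (fun x => G.Adj y x)) :=
    disjoint_filter_filter sdiff_disjoint
  have := card_union_of_disjoint hdisj
  rw [← hsplit, huniv, aux_inK hK hy] at this
  omega

lemma aux_pair (hG : G.IsSRGWith 75 32 10 16) (hK : G.IsNClique 4 K)
    {u v : V} (hu : u ∈ K) (hv : v ∈ K) (huv : u ≠ v) :
    ((univ \ K).filter (fun x => G.Adj u x ∧ G.Adj v x)).card = 8 := by
  have hadj : G.Adj u v := hK.1 hu hv huv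
  have huniv : (univ.filter (fun x => G.Adj u x ∧ G.Adj v x)).card = 10 := by
    have h10 := hG.of_adj u v hadj
    rw [← Set.toFinset_card] at h10
    rw [← h10]
    congr 1
    ext z
    simp [SimpleGraph.mem_commonNeighbors]
  have hinK : (K.filter (fun x => G.Adj u x ∧ G.Adj v x)).card = 2 := by
    have : K.filter (fun x => G.Adj u x ∧ G.Adj v x) = (K.erase u).erase v := by
      ext z
      simp only [mem_filter, mem_erase]
      constructor
      · rintro ⟨hz, ha, hb⟩
        exact ⟨(G.ne_of_adj hb).symm, (G.ne_of_adj ha).symm, hz⟩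
      · rintro ⟨hnv, hnu, hz⟩
        exact ⟨hz, hK.1 hu hz (Ne.symm hnu), hK.1 hv hz (Ne.symm hnv)⟩
    rw [this, card_erase_of_mem, card_erase_of_mem hu, hK.2]
    exact mem_erase.2 ⟨huv.symm, hv⟩
  have hsplit : univ.filter (fun x => G.Adj u x ∧ G.Adj v x) =
      (univ \ K).filter (fun x => G.Adj u x ∧ G.Adj v x) ∪
        K.filter (fun x => G.Adj u x ∧ G.Adj v x) := by
    rw [← filter_union, sdiff_union_of_subset (subset_univ K)]
  have hdisj : Disjoint ((univ \ K).filter (fun x => G.Adj u x ∧ G.Adj v x))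
      (K.filter (fun x => G.Adj u x ∧ G.Adj v x)) :=
    disjoint_filter_filter sdiff_disjoint
  have := card_union_of_disjoint hdisj
  rw [← hsplit, huniv, hinK] at this
  omega

end Aux

set_option maxHeartbeats 1600000 in
/-- If `K` is a 4-clique of a (75,32,10,16) SRG not contained in any 5-clique,
then `b₄ = 0` and `(b₀,b₁,b₂,b₃)` is one of `(3,20,48,0)`, `(0,29,39,3)`,
`(1,26,42,2)`, `(2,23,45,1)`. -/
theorem stmt18 {V : Type*} [Fintype V] [DecidableEq V]
    (G : SimpleGraph V) [DecidableRel G.Adj]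
    (hG : G.IsSRGWith 75 32 10 16)
    (K : Finset V) (hK : G.IsNClique 4 K)
    (hno5 : ¬ ∃ t : Finset V, G.IsNClique 5 t ∧ K ⊆ t) :
    bcount G K 4 = 0 ∧
    ((bcount G K 0, bcount G K 1, bcount G K 2, bcount G K 3) = (3, 20, 48, 0) ∨
     (bcount G K 0, bcount G K 1, bcount G K 2, bcount G K 3) = (0, 29, 39, 3) ∨
     (bcount G K 0, bcount G K 1, bcount G K 2, bcount G K 3) = (1, 26, 42, 2) ∨
     (bcount G K 0, bcount G K 1, bcount G K 2, bcount G K 3) = (2, 23, 45, 1)) := by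
  set S : Finset V := univ \ K with hS
  -- b₄ = 0
  have hb4 : bcount G K 4 = 0 := by
    rw [bcount, card_eq_zero, filter_eq_empty_iff]
    rintro x hx h4
    have hxK : x ∉ K := (mem_sdiff.1 hx).2
    have hsub : K.filter (fun y => G.Adj x y) ⊆ K := filter_subset _ _
    have heq : K.filter (fun y => G.Adj x y) = K := by
      apply eq_of_subset_of_card_le hsub
      rw [hK.2]; exact le_of_eq h4.symm
    have hall : ∀ y ∈ K, G.Adj x y := fun y hy => by
      have : y ∈ K.filter (fun y => G.Adj x y) := by rw [heq]; exact hy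
      exact (mem_filter.1 this).2
    exact hno5 ⟨insert x K, hK.insert hall, subset_insert x K⟩
  refine ⟨hb4, ?_⟩
  -- nbrs is bounded by 4
  have hmaps : ∀ x ∈ S, nbrs G K x ∈ range 5 := by
    intro x _
    rw [mem_range]
    have : nbrs G K x ≤ K.card := card_filter_le _ _
    rw [hK.2] at this; omega
  -- identity 1
  have hId1 : ∑ i ∈ range 5, bcount G K i = 71 := by
    have hcard : S.card = 71 := by
      rw [hS, card_sdiff_of_subset (subset_univ K), card_univ, hG.card, hK.2]
    rw [← hcard, card_eq_sum_card_fiberwise hmaps]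
    rfl
  -- sum over S of nbrs
  have hnbrs_split : ∀ x : V, nbrs G K x = ∑ y ∈ K, if G.Adj x y then 1 else 0 := by
    intro x; rw [nbrs, card_filter]
  have hId2 : ∑ i ∈ range 5, i * bcount G K i = 116 := by
    have h1 : ∑ x ∈ S, nbrs G K x = 116 := by
      calc ∑ x ∈ S, nbrs G K x
          = ∑ x ∈ S, ∑ y ∈ K, if G.Adj x y then 1 else 0 := by
            exact Finset.sum_congr rfl fun x _ => hnbrs_split x
        _ = ∑ y ∈ K, ∑ x ∈ S, if G.Adj y x then 1 else 0 := by
            rw [Finset.sum_comm]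
            exact Finset.sum_congr rfl fun y _ => Finset.sum_congr rfl fun x _ =>
              if_congr (G.adj_comm x y) rfl rfl
        _ = ∑ y ∈ K, (S.filter (fun x => G.Adj y x)).card := by
            exact Finset.sum_congr rfl fun y _ => (card_filter _ _).symm
        _ = ∑ y ∈ K, 29 := Finset.sum_congr rfl fun y hy => aux_deg hG hK hy
        _ = 116 := by rw [Finset.sum_const, hK.2]; rfl
    rw [← h1, ← Finset.sum_fiberwise_of_maps_to hmaps (nbrs G K)]
    refine Finset.sum_congr rfl fun i _ => ?_
    rw [bcount]
    rw [Finset.sum_congr rfl (fun x hx => (mem_filter.1 hx).2), Finset.sum_const,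
      smul_eq_mul, mul_comm]
  -- sum of squares
  have hId3 : ∑ i ∈ range 5, i * i * bcount G K i = 212 := by
    have h1 : ∑ x ∈ S, nbrs G K x * nbrs G K x = 212 := by
      calc ∑ x ∈ S, nbrs G K x * nbrs G K x
          = ∑ x ∈ S, ∑ y ∈ K, ∑ z ∈ K,
              (if G.Adj x y then 1 else 0) * (if G.Adj x z then 1 else 0) := by
            refine Finset.sum_congr rfl fun x _ => ?_
            rw [hnbrs_split x, Finset.sum_mul_sum]
        _ = ∑ y ∈ K, ∑ z ∈ K, ∑ x ∈ S,
              (if G.Adj y x ∧ G.Adj z x then 1 else 0) := by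
            rw [Finset.sum_comm]
            refine Finset.sum_congr rfl fun y _ => ?_
            rw [Finset.sum_comm]
            refine Finset.sum_congr rfl fun z _ => Finset.sum_congr rfl fun x _ => ?_
            have e1 : G.Adj y x ↔ G.Adj x y := G.adj_comm y x
            have e2 : G.Adj z x ↔ G.Adj x z := G.adj_comm z x
            by_cases h1 : G.Adj x y <;> by_cases h2 : G.Adj x z <;>
              simp [h1, h2, e1, e2]
        _ = ∑ y ∈ K, ∑ z ∈ K,
              (S.filter (fun x => G.Adj y x ∧ G.Adj z x)).card := by
            exact Finset.sum_congr rfl fun y _ => Finset.sum_congr rfl fun z _ =>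
              (card_filter _ _).symm
        _ = ∑ y ∈ K, ∑ z ∈ K, (if y = z then 29 else 8) := by
            refine Finset.sum_congr rfl fun y hy => Finset.sum_congr rfl fun z hz => ?_
            by_cases h : y = z
            · subst h
              simp only [if_pos rfl]
              have he : S.filter (fun x => G.Adj y x ∧ G.Adj y x)
                  = S.filter (fun x => G.Adj y x) := filter_congr fun x _ => by simp
              rw [he]
              exact aux_deg hG hK hy
            · rw [if_neg h]
              exact aux_pair hG hK hy hz h
        _ = ∑ y ∈ K, 53 := by
            refine Finset.sum_congr rfl fun y hy => ?_
            rw [← Finset.add_sum_erase _ _ hy, if_pos rfl]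
            rw [Finset.sum_congr rfl (fun z hz => if_neg (Ne.symm (mem_erase.1 hz).1)),
              Finset.sum_const, card_erase_of_mem hy, hK.2]
            rfl
        _ = 212 := by rw [Finset.sum_const, hK.2]; rfl
    rw [← h1, ← Finset.sum_fiberwise_of_maps_to hmaps (fun x => nbrs G K x * nbrs G K x)]
    refine Finset.sum_congr rfl fun i _ => ?_
    rw [bcount]
    rw [Finset.sum_congr rfl (fun x hx => by rw [(mem_filter.1 hx).2]), Finset.sum_const,
      smul_eq_mul, mul_comm]
  simp only [Finset.sum_range_succ, Finset.sum_range_zero] at hId1 hId2 hId3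
  simp only [Prod.mk.injEq]
  omega
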